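/- arXiv:1312.2946 — 3 statements merged into one kernel-verified Lean document; each statement's English description precedes it below -/
import Mathlib

section
/- Let 𝒢=(V,E,c,∂V) be a finite weighted graph with boundary such that (V,E) is connected and ∂V is nonempty, and let G=Δ⁻¹ be the Green function. Let (Γ_v)_{v∈V°} be a square-integrable random vector on a probability space with E[Γ_v]=0 for all v and E[Γ_u Γ_v] = G(u,v) for all u,v ∈ V° (for instance the discrete Gaussian free field with wired boundary conditions). Define the current flow J = dΓ ∈ Ω¹ (with Γ extended by 0 on ∂V). Then for every 1-form α ∈ Ω¹, E[⟨J, α⟩²] = ⟨α, Pα⟩, where P = d∘G∘d* and ⟨·,·⟩ is the weighted inner product on Ω¹; that is, the covariance of the current flow of the discrete Gaussian free field is given by the transfer current operator. -/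
/-!
Statement 7: Let Γ be a centered square-integrable random field on V° with
covariance given by the Green function G (e.g. the discrete Gaussian free
field with wired boundary conditions), and J = dΓ its current flow. Then for
every 1-form α ∈ Ω¹, E[⟨J,α⟩²] = ⟨α, Pα⟩ with P = d ∘ G ∘ d*.
-/

open Finset

variable {V : Type*} [Fintype V] [DecidableEq V]

/-- Inner product on `Ω⁰`, the space of functions on interior vertices
(functions on `V` vanishing on the boundary `B`). -/
noncomputable def inner0 (B : Finset V) (f g : V → ℝ) : ℝ :=
  ∑ v ∈ Finset.univ.filter (fun v => v ∉ B), f v * g v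

/-- Weighted inner product on `Ω¹`: `⟨α,β⟩ = (1/2) ∑_{e ∈ E^±} c(e) α(e) β(e)`. -/
noncomputable def inner1 (c : V → V → ℝ) (a b : V → V → ℝ) : ℝ :=
  (1 / 2) * ∑ x : V, ∑ y : V, c x y * a x y * b x y

/-- `f` belongs to `Ω⁰`: it vanishes on the boundary. -/
def isForm0 (B : Finset V) (f : V → ℝ) : Prop := ∀ v ∈ B, f v = 0

/-- `a` belongs to `Ω¹`: it is antisymmetric and supported on directed edges. -/
def isForm1 (G : SimpleGraph V) (a : V → V → ℝ) : Prop :=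
  (∀ x y, a y x = - a x y) ∧ (∀ x y, ¬ G.Adj x y → a x y = 0)

/-- The differential `d : Ω⁰ → Ω¹`, `df(xy) = f(y) − f(x)` on edges. -/
noncomputable def dd (G : SimpleGraph V) [DecidableRel G.Adj] (f : V → ℝ) : V → V → ℝ :=
  fun x y => if G.Adj x y then f y - f x else 0

/-- The codifferential `d* : Ω¹ → Ω⁰`, `d*α(v) = ∑_{v' ∼ v} c(v'v) α(v'v)`
for interior `v` (and `0` on the boundary). -/
noncomputable def dStar (G : SimpleGraph V) [DecidableRel G.Adj] (c : V → V → ℝ) (B : Finset V)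
    (a : V → V → ℝ) : V → ℝ :=
  fun v => if v ∈ B then 0 else ∑ w : V, if G.Adj w v then c w v * a w v else 0

/-- The Laplacian `Δ = d*d`, `Δf(v) = ∑_{v' ∼ v} c(vv')(f(v) − f(v'))` for
interior `v` (and `0` on the boundary). -/
noncomputable def lap (G : SimpleGraph V) [DecidableRel G.Adj] (c : V → V → ℝ) (B : Finset V)
    (f : V → ℝ) : V → ℝ :=
  fun v => if v ∈ B then 0 else ∑ w : V, if G.Adj v w then c v w * (f v - f w) else 0

open MeasureTheory

/-- Summation by parts: `⟨df, a⟩ = ⟨f, d*a⟩` for `f` vanishing on the boundary. -/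
lemma sum_by_parts (G : SimpleGraph V) [DecidableRel G.Adj]
    (c : V → V → ℝ) (hc_symm : ∀ x y, c x y = c y x) (B : Finset V)
    (f : V → ℝ) (hf : ∀ v ∈ B, f v = 0)
    (a : V → V → ℝ) (ha : isForm1 G a) :
    inner1 c (dd G f) a =
      ∑ v ∈ Finset.univ.filter (fun v => v ∉ B), f v * dStar G c B a v := by
  have hT : ∀ x y : V, (if G.Adj y x then c y x * f x * a y x else 0)
      = -(if G.Adj x y then c x y * f x * a x y else 0) := by
    intro x y
    by_cases h : G.Adj x y
    · rw [if_pos h.symm, if_pos h, hc_symm y x, ha.1 x y]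
      ring
    · have h' : ¬ G.Adj y x := fun hh => h hh.symm
      simp [h, h']
  -- rewrite RHS as a full double sum
  have hR : (∑ v ∈ Finset.univ.filter (fun v => v ∉ B), f v * dStar G c B a v)
      = ∑ x : V, ∑ y : V, (if G.Adj y x then c y x * f x * a y x else 0) := by
    rw [Finset.sum_filter]
    apply Finset.sum_congr rfl
    intro v _
    by_cases hv : v ∈ B
    · simp [hv, hf v hv]
    · simp only [hv, if_false, ite_not, dStar, if_neg hv, Finset.mul_sum]
      apply Finset.sum_congr rfl
      intro w _
      by_cases hw : G.Adj w v
      · simp [hw]; ring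
      · simp [hw]
  rw [hR]
  -- rewrite LHS
  unfold inner1 dd
  have hL : ∀ x y : V, c x y * (if G.Adj x y then f y - f x else 0) * a x y
      = (if G.Adj x y then c x y * f y * a x y else 0)
        - (if G.Adj x y then c x y * f x * a x y else 0) := by
    intro x y
    by_cases h : G.Adj x y
    · simp [h]; ring
    · simp [h]
  simp only [hL, Finset.sum_sub_distrib]
  -- the first double sum equals minus the second, by swapping indices
  have hswap : (∑ x : V, ∑ y : V, if G.Adj x y then c x y * f y * a x y else 0)
      = ∑ x : V, ∑ y : V, (if G.Adj y x then c y x * f x * a y x else 0) := by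
    rw [Finset.sum_comm]
  rw [hswap]
  have hneg : (∑ x : V, ∑ y : V, (if G.Adj y x then c y x * f x * a y x else 0))
      = -∑ x : V, ∑ y : V, (if G.Adj x y then c x y * f x * a x y else 0) := by
    rw [← Finset.sum_neg_distrib]
    apply Finset.sum_congr rfl; intro x _
    rw [← Finset.sum_neg_distrib]
    apply Finset.sum_congr rfl; intro y _
    rw [hT]
  rw [hneg]
  ring

/-- The covariance of the current flow of the discrete Gaussian
free field is given by the transfer current operator `P = d ∘ G ∘ d*`. -/
theorem dgff_current_flow_covariance
    (G : SimpleGraph V) [DecidableRel G.Adj]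
    (c : V → V → ℝ)
    (hc_symm : ∀ x y, c x y = c y x)
    (hc_pos : ∀ x y, G.Adj x y → 0 < c x y)
    (B : Finset V)
    (hconn : G.Connected) (hB : B.Nonempty)
    -- `Gk` is the Green kernel: vanishing at boundary vertices and inverting
    -- the Laplacian
    (Gk : V → V → ℝ)
    (hGk_bdry : ∀ u v, u ∈ B ∨ v ∈ B → Gk u v = 0)
    (hGk_green : ∀ u, u ∉ B →
      lap G c B (fun v => Gk u v) = fun v => if v = u then 1 else 0)
    -- the random field `Γ` on a probability space, extended by `0` on the boundary
    {Ω : Type*} [MeasureSpace Ω] [IsProbabilityMeasure (volume : Measure Ω)]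
    (Γ : Ω → V → ℝ)
    (hL2 : ∀ v, MemLp (fun ω => Γ ω v) 2)
    (hbdry : ∀ ω, ∀ v ∈ B, Γ ω v = 0)
    (hmean : ∀ v, (∫ ω, Γ ω v) = 0)
    (hcov : ∀ u v, u ∉ B → v ∉ B → (∫ ω, Γ ω u * Γ ω v) = Gk u v)
    -- the 1-form `α`
    (a : V → V → ℝ) (ha : isForm1 G a) :
    (∫ ω, (inner1 c (dd G (Γ ω)) a) ^ 2) =
      inner1 c a (dd G (fun z => ∑ w : V, Gk z w * dStar G c B a w)) := by
  set b : V → ℝ := dStar G c B a with hb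
  set I : Finset V := Finset.univ.filter (fun v => v ∉ B) with hI
  -- integrability of pairwise products
  have hint : ∀ u v : V, Integrable (fun ω => Γ ω u * Γ ω v) := by
    intro u v
    have h := (hL2 v).smul (φ := fun ω => Γ ω u) (hL2 u)
      (r := 1)
    rw [memLp_one_iff_integrable] at h
    exact h
  -- LHS computation
  have hX : ∀ ω, inner1 c (dd G (Γ ω)) a = ∑ v ∈ I, Γ ω v * b v := fun ω =>
    sum_by_parts G c hc_symm B (Γ ω) (hbdry ω) a ha
  have hLHS : (∫ ω, (inner1 c (dd G (Γ ω)) a) ^ 2)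
      = ∑ u ∈ I, ∑ v ∈ I, b u * b v * Gk u v := by
    have hsq : ∀ ω, (inner1 c (dd G (Γ ω)) a) ^ 2
        = ∑ u ∈ I, ∑ v ∈ I, (b u * b v) * (Γ ω u * Γ ω v) := by
      intro ω
      rw [hX ω, sq, Finset.sum_mul_sum]
      apply Finset.sum_congr rfl; intro u _
      apply Finset.sum_congr rfl; intro v _
      ring
    simp only [hsq]
    rw [integral_finset_sum _ (fun u _ => integrable_finset_sum _
      (fun v _ => ((hint u v).const_mul _)))]
    apply Finset.sum_congr rfl; intro u hu
    rw [integral_finset_sum _ (fun v _ => ((hint u v).const_mul _))]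
    apply Finset.sum_congr rfl; intro v hv
    rw [MeasureTheory.integral_const_mul, hcov u v (by simpa [hI] using hu) (by simpa [hI] using hv)]
  rw [hLHS]
  -- RHS computation
  set f0 : V → ℝ := fun z => ∑ w : V, Gk z w * b w with hf0
  have hf0B : ∀ v ∈ B, f0 v = 0 := by
    intro v hv
    simp only [hf0]
    apply Finset.sum_eq_zero
    intro w _
    rw [hGk_bdry v w (Or.inl hv), zero_mul]
  have hcomm : inner1 c a (dd G f0) = inner1 c (dd G f0) a := by
    unfold inner1
    congr 1
    apply Finset.sum_congr rfl; intro x _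
    apply Finset.sum_congr rfl; intro y _
    ring
  rw [hcomm, sum_by_parts G c hc_symm B f0 hf0B a ha]
  have hbB : ∀ w ∈ B, b w = 0 := by
    intro w hw; simp [hb, dStar, hw]
  calc ∑ u ∈ I, ∑ v ∈ I, b u * b v * Gk u v
      = ∑ u ∈ I, ∑ v : V, Gk u v * b v * b u := by
        apply Finset.sum_congr rfl; intro u _
        rw [Finset.sum_filter]
        apply Finset.sum_congr rfl; intro v _
        by_cases hv : v ∈ B
        · simp [hv, hbB v hv]
        · rw [if_pos hv]; ring
    _ = ∑ v ∈ I, f0 v * b v := by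
        apply Finset.sum_congr rfl; intro u _
        simp only [hf0, Finset.sum_mul]
end

section
/- Let Ω be a finite set and let μ be a determinantal probability measure on the subsets of Ω with kernel K. Then for every subset A ⊆ Ω and every real number z, the probability generating function of the number of points in A satisfies E_μ[z^{|𝒯∩A|}] = det(z·K_A + I_A − K_A), where K_A is the principal submatrix of K indexed by A and I_A the identity matrix indexed by A. -/
/-!
Statement 10: For a determinantal probability measure μ with kernel K on the
subsets of a finite set Ω, for every A ⊆ Ω and z ∈ ℝ,
E_μ[z^{|𝒯∩A|}] = det(z·K_A + I_A − K_A).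
-/

open Finset

variable {α : Type*} [Fintype α] [DecidableEq α]

/-- The determinant of the principal submatrix of `K` with rows and columns
indexed by the finite set `S`. -/
noncomputable def detSub (K : Matrix α α ℝ) (S : Finset α) : ℝ :=
  Matrix.det (K.submatrix (fun i : {x : α // x ∈ S} => (i : α))
    (fun j : {x : α // x ∈ S} => (j : α)))

/-- `μ` is a probability measure on the power set of `α`. -/
def IsProbMeasure (μ : Finset α → ℝ) : Prop :=
  (∀ T, 0 ≤ μ T) ∧ (∑ T : Finset α, μ T) = 1

/-- `μ` is determinantal with kernel `K`:
`μ {T : S ⊆ T} = det K_S` for every `S ⊆ Ω`. -/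
def IsDeterminantal (μ : Finset α → ℝ) (K : Matrix α α ℝ) : Prop :=
  ∀ S : Finset α, (∑ T : Finset α, if S ⊆ T then μ T else 0) = detSub K S

/-- Expansion of the PGF monomial via subsets. -/
lemma pow_card_expand (z : ℝ) (P : Finset α) :
    z ^ P.card = ∑ S ∈ P.powerset, (z - 1) ^ S.card := by
  rw [Finset.sum_powerset_apply_card (fun i => (z - 1) ^ i)]
  have h := add_pow (z - 1) 1 P.card
  simp only [one_pow, mul_one, sub_add_cancel] at h
  rw [h]
  refine Finset.sum_congr rfl fun k _ => ?_
  rw [nsmul_eq_mul]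
  ring

/-- determinant of a row-piecewise matrix between `M` and the identity. -/
lemma det_piecewise {n : Type*} [Fintype n] [DecidableEq n] (M : Matrix n n ℝ)
    (s : Finset n) :
    Matrix.det (s.piecewise M (1 : Matrix n n ℝ)) =
      Matrix.det (M.submatrix (fun i : {x : n // x ∈ s} => (i : n))
        (fun j : {x : n // x ∈ s} => (j : n))) := by
  classical
  let e : {x : n // x ∈ s} ⊕ {x : n // x ∉ s} ≃ n := Equiv.sumCompl (· ∈ s)
  refine (Matrix.det_submatrix_equiv_self e _).symm.trans ?_
  have : Matrix.submatrix (s.piecewise M (1 : Matrix n n ℝ)) e e =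
      Matrix.fromBlocks
        (M.submatrix (fun i : {x : n // x ∈ s} => (i : n))
          (fun j : {x : n // x ∈ s} => (j : n)))
        (Matrix.of fun (i : {x : n // x ∈ s}) (j : {x : n // x ∉ s}) => M i j)
        0 1 := by
    ext i j
    cases i with
    | inl i =>
      cases j with
      | inl j =>
        simp [e, Matrix.submatrix, Finset.piecewise, i.2]
      | inr j =>
        simp [e, Matrix.submatrix, Finset.piecewise, i.2]
    | inr i =>
      cases j with
      | inl j =>
        have hne : (i : n) ≠ (j : n) := fun h => i.2 (h ▸ j.2)
        simp [e, Matrix.submatrix, Finset.piecewise, i.2, Matrix.one_apply, hne]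
      | inr j =>
        by_cases h : (i : n) = (j : n)
        · have : i = j := Subtype.ext h
          simp [e, Matrix.submatrix, Finset.piecewise, i.2, j.2, Matrix.one_apply, this]
        · have : i ≠ j := fun hh => h (congrArg Subtype.val hh)
          simp [e, Matrix.submatrix, Finset.piecewise, i.2, Matrix.one_apply, h, this]
  rw [this, Matrix.det_fromBlocks_zero₂₁]
  simp

/-- Principal-minor expansion of `det (1 + M)`. -/
lemma det_one_add_expand {n : Type*} [Fintype n] [DecidableEq n] (M : Matrix n n ℝ) :
    Matrix.det (1 + M) = ∑ s : Finset n,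
      Matrix.det (M.submatrix (fun i : {x : n // x ∈ s} => (i : n))
        (fun j : {x : n // x ∈ s} => (j : n))) := by
  classical
  rw [add_comm (1 : Matrix n n ℝ) M]
  have := (Matrix.detRowAlternating (R := ℝ) (n := n)).map_add_univ
    (M : n → n → ℝ) ((1 : Matrix n n ℝ) : n → n → ℝ)
  have hdet : Matrix.det (M + 1) = ∑ s : Finset n,
      Matrix.det (s.piecewise M (1 : Matrix n n ℝ)) := this
  rw [hdet]
  exact Finset.sum_congr rfl fun s _ => det_piecewise M s

/-- Reindexing equivalence between subsets of the subtype and their images. -/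
noncomputable def subsetEquiv (A : Finset α) (s : Finset {x : α // x ∈ A}) :
    {y : {x : α // x ∈ A} // y ∈ s} ≃
      {y : α // y ∈ s.map (Function.Embedding.subtype _)} where
  toFun y := ⟨y.1.1, Finset.mem_map_of_mem _ y.2⟩
  invFun y := ⟨⟨y.1, by
      obtain ⟨b, hb, e⟩ := Finset.mem_map.1 y.2
      exact e ▸ b.2⟩, by
      obtain ⟨b, hb, e⟩ := Finset.mem_map.1 y.2
      have : (⟨y.1, by exact e ▸ b.2⟩ : {x : α // x ∈ A}) = b := by
        apply Subtype.ext; exact e.symm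
      rw [this]; exact hb⟩
  left_inv y := by apply Subtype.ext; apply Subtype.ext; rfl
  right_inv y := by apply Subtype.ext; rfl

lemma detSub_map (K : Matrix α α ℝ) (A : Finset α) (s : Finset {x : α // x ∈ A}) :
    detSub K (s.map (Function.Embedding.subtype _)) =
      Matrix.det ((K.submatrix (fun i : {x : α // x ∈ A} => (i : α))
          (fun j : {x : α // x ∈ A} => (j : α))).submatrix
        (fun i : {x : {x : α // x ∈ A} // x ∈ s} => (i : {x : α // x ∈ A}))
        (fun j : {x : {x : α // x ∈ A} // x ∈ s} => (j : {x : α // x ∈ A}))) := by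
  unfold detSub
  rw [Matrix.submatrix_submatrix]
  rw [← Matrix.det_submatrix_equiv_self (subsetEquiv A s)]
  rw [Matrix.submatrix_submatrix]
  rfl

/-- Probability generating function of the number of points in `A`. -/
theorem generating_function_det
    (μ : Finset α → ℝ) (K : Matrix α α ℝ)
    (hprob : IsProbMeasure μ) (hdet : IsDeterminantal μ K) :
    ∀ (A : Finset α) (z : ℝ),
      (∑ T : Finset α, μ T * z ^ (T ∩ A).card) =
        Matrix.det
          (z • (K.submatrix (fun i : {x : α // x ∈ A} => (i : α))
              (fun j : {x : α // x ∈ A} => (j : α)))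
            + 1
            - K.submatrix (fun i : {x : α // x ∈ A} => (i : α))
              (fun j : {x : α // x ∈ A} => (j : α))) := by
  intro A z
  set KA := K.submatrix (fun i : {x : α // x ∈ A} => (i : α))
      (fun j : {x : α // x ∈ A} => (j : α)) with hKA
  -- LHS = ∑ S ⊆ A, (z-1)^|S| * detSub K S
  have lhs_eq : (∑ T : Finset α, μ T * z ^ (T ∩ A).card) =
      ∑ S ∈ A.powerset, (z - 1) ^ S.card * detSub K S := by
    calc (∑ T : Finset α, μ T * z ^ (T ∩ A).card)
        = ∑ T : Finset α, ∑ S ∈ A.powerset,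
            (z - 1) ^ S.card * (if S ⊆ T then μ T else 0) := by
          refine Finset.sum_congr rfl fun T _ => ?_
          rw [pow_card_expand z (T ∩ A), Finset.mul_sum]
          rw [← Finset.sum_filter_add_sum_filter_not A.powerset (· ⊆ T)]
          have h2 : ∑ S ∈ A.powerset.filter (¬ · ⊆ T),
              (z - 1) ^ S.card * (if S ⊆ T then μ T else 0) = 0 := by
            refine Finset.sum_eq_zero fun S hS => ?_
            rw [Finset.mem_filter] at hS
            simp [hS.2]
          rw [h2, add_zero]
          have hset : (T ∩ A).powerset = A.powerset.filter (· ⊆ T) := by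
            ext S
            simp only [Finset.mem_powerset, Finset.mem_filter, Finset.subset_inter_iff]
            tauto
          rw [hset]
          refine Finset.sum_congr rfl fun S hS => ?_
          rw [Finset.mem_filter] at hS
          simp [hS.2, mul_comm]
      _ = ∑ S ∈ A.powerset, (z - 1) ^ S.card *
            ∑ T : Finset α, (if S ⊆ T then μ T else 0) := by
          rw [Finset.sum_comm]
          exact Finset.sum_congr rfl fun S _ => by rw [Finset.mul_sum]
      _ = ∑ S ∈ A.powerset, (z - 1) ^ S.card * detSub K S := by
          exact Finset.sum_congr rfl fun S _ => by rw [hdet S]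
  -- RHS
  have hmat : z • KA + 1 - KA = 1 + (z - 1) • KA := by
    ext i j
    simp [Matrix.add_apply, Matrix.sub_apply, Matrix.smul_apply]
    ring
  rw [lhs_eq, hmat, det_one_add_expand]
  -- reindex the powerset sum
  have key : ∀ s : Finset {x : α // x ∈ A},
      Matrix.det (((z - 1) • KA).submatrix
        (fun i : {x : {x : α // x ∈ A} // x ∈ s} => (i : {x : α // x ∈ A}))
        (fun j : {x : {x : α // x ∈ A} // x ∈ s} => (j : {x : α // x ∈ A}))) =
      (z - 1) ^ s.card * detSub K (s.map (Function.Embedding.subtype _)) := by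
    intro s
    have hsub : ((z - 1) • KA).submatrix
        (fun i : {x : {x : α // x ∈ A} // x ∈ s} => (i : {x : α // x ∈ A}))
        (fun j : {x : {x : α // x ∈ A} // x ∈ s} => (j : {x : α // x ∈ A})) =
        (z - 1) • (KA.submatrix
        (fun i : {x : {x : α // x ∈ A} // x ∈ s} => (i : {x : α // x ∈ A}))
        (fun j : {x : {x : α // x ∈ A} // x ∈ s} => (j : {x : α // x ∈ A}))) := rfl
    rw [hsub, Matrix.det_smul, detSub_map, Fintype.card_coe]
  refine Finset.sum_nbij' (fun S => S.subtype (· ∈ A))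
    (fun s => s.map (Function.Embedding.subtype _)) ?_ ?_ ?_ ?_ ?_
  · intro S _; exact Finset.mem_univ _
  · intro s _
    rw [Finset.mem_powerset]
    intro a ha
    exact Finset.property_of_mem_map_subtype s ha
  · intro S hS
    exact Finset.subtype_map_of_mem (Finset.mem_powerset.1 hS)
  · intro s _
    ext a
    simp only [Finset.mem_subtype, Finset.mem_map, Function.Embedding.coe_subtype]
    constructor
    · rintro ⟨b, hb, e⟩
      exact (Subtype.ext e.symm : a = b) ▸ hb
    · intro ha; exact ⟨a, ha, rfl⟩
  · intro S hS
    have h1 : (S.subtype (· ∈ A)).map (Function.Embedding.subtype _) = S :=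
      Finset.subtype_map_of_mem (Finset.mem_powerset.1 hS)
    have h2 : (S.subtype (· ∈ A)).card = S.card := by
      rw [← Finset.card_map (Function.Embedding.subtype _), h1]
    rw [key, h1, h2]
end

section
/- Let Ω be a finite set and let μ be a determinantal probability measure on the subsets of Ω with kernel K. Then for any distinct points x₁,…,x_k ∈ Ω, the fully centered correlation satisfies E_μ[ ∏_{i=1}^k ( 1_{x_i∈𝒯} − K(x_i,x_i) ) ] = det(M), where M is the k×k matrix with entries M_{ij} = K(x_i,x_j) for i ≠ j and M_{ii} = 0 on the diagonal. -/
/-!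
Statement 15: For a determinantal probability measure μ with kernel K, and
distinct points x₁,…,x_k, E_μ[∏ᵢ(1_{xᵢ∈𝒯} − K(xᵢ,xᵢ))] = det M where
M_{ij} = K(x_i,x_j) for i ≠ j and M_{ii} = 0.
-/

open Finset

variable {α : Type*} [Fintype α] [DecidableEq α]

lemma det_piecewise_aux {k : ℕ} (x : Fin k → α) (hx : Function.Injective x)
    (K : Matrix α α ℝ) (s : Finset (Fin k)) :
    Matrix.det (Matrix.of (s.piecewise (fun i j => K (x i) (x j))
        (fun i j => if i = j then -K (x i) (x i) else 0)))
      = detSub K (s.image x) * ∏ i ∈ sᶜ, (-K (x i) (x i)) := by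
  classical
  set a : Fin k → Fin k → ℝ := fun i j => K (x i) (x j)
  set b : Fin k → Fin k → ℝ := fun i j => if i = j then -K (x i) (x i) else 0
  let e : {i : Fin k // i ∈ s} ⊕ {i : Fin k // ¬ i ∈ s} ≃ Fin k :=
    Equiv.sumCompl (fun i => i ∈ s)
  rw [← Matrix.det_submatrix_equiv_self e]
  have hsub : (Matrix.of (s.piecewise a b)).submatrix e e =
      Matrix.fromBlocks
        (Matrix.of fun i j : {i : Fin k // i ∈ s} => K (x i) (x j))
        (Matrix.of fun (i : {i : Fin k // i ∈ s}) (j : {i : Fin k // ¬ i ∈ s}) => K (x i) (x j))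
        0
        (Matrix.diagonal fun i : {i : Fin k // ¬ i ∈ s} => -K (x i) (x i)) := by
    ext i j
    cases i with
    | inl i =>
      cases j with
      | inl j => simp [e, Finset.piecewise, i.2, a]
      | inr j => simp [e, Finset.piecewise, i.2, a]
    | inr i =>
      cases j with
      | inl j =>
        have : (i : Fin k) ≠ (j : Fin k) := by
          intro h; exact i.2 (h ▸ j.2)
        simp [e, Finset.piecewise, i.2, b, this]
      | inr j =>
        by_cases h : (i : Fin k) = (j : Fin k)
        · have : i = j := Subtype.ext h
          subst this
          simp [e, Finset.piecewise, i.2, b]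
        · have : i ≠ j := fun hh => h (congrArg _ hh)
          simp [e, Finset.piecewise, i.2, b, h, Matrix.diagonal_apply_ne _ this]
  rw [hsub, Matrix.det_fromBlocks_zero₂₁, Matrix.det_diagonal]
  congr 1
  · -- det A = detSub
    have hinj : Function.Injective
        (fun i : {i : Fin k // i ∈ s} =>
          (⟨x i, Finset.mem_image_of_mem x i.2⟩ : {a : α // a ∈ s.image x})) := by
      intro i j h
      exact Subtype.ext (hx (congrArg Subtype.val h))
    have hsurj : Function.Surjective
        (fun i : {i : Fin k // i ∈ s} =>
          (⟨x i, Finset.mem_image_of_mem x i.2⟩ : {a : α // a ∈ s.image x})) := by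
      rintro ⟨a, ha⟩
      obtain ⟨i, hi, rfl⟩ := Finset.mem_image.mp ha
      exact ⟨⟨i, hi⟩, rfl⟩
    let e2 : {i : Fin k // i ∈ s} ≃ {a : α // a ∈ s.image x} :=
      Equiv.ofBijective _ ⟨hinj, hsurj⟩
    have : (Matrix.of fun i j : {i : Fin k // i ∈ s} => K (x i) (x j)) =
        (K.submatrix (fun i : {a : α // a ∈ s.image x} => (i : α))
          (fun j : {a : α // a ∈ s.image x} => (j : α))).submatrix e2 e2 := rfl
    rw [this, Matrix.det_submatrix_equiv_self]
    rfl
  · -- det D = prod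
    exact (Finset.prod_subtype sᶜ (fun i => Finset.mem_compl) fun i => -K (x i) (x i)).symm


/-- Fully centered correlations equal the determinant of the
kernel matrix with zeroed diagonal. -/
theorem centered_correlation_det
    (μ : Finset α → ℝ) (K : Matrix α α ℝ)
    (hprob : IsProbMeasure μ) (hdet : IsDeterminantal μ K) :
    ∀ (k : ℕ) (x : Fin k → α), Function.Injective x →
      (∑ T : Finset α,
          μ T * ∏ i : Fin k, ((if x i ∈ T then (1 : ℝ) else 0) - K (x i) (x i)))
        = Matrix.det (Matrix.of fun i j : Fin k =>
            if i = j then 0 else K (x i) (x j)) := by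
  intro k x hx
  classical
  -- expand the product
  have hprod : ∀ T : Finset α,
      (∏ i : Fin k, ((if x i ∈ T then (1 : ℝ) else 0) - K (x i) (x i)))
        = ∑ s : Finset (Fin k),
            (if s.image x ⊆ T then (1 : ℝ) else 0) * ∏ i ∈ sᶜ, (-K (x i) (x i)) := by
    intro T
    have h1 := Finset.prod_add (fun i => if x i ∈ T then (1 : ℝ) else 0)
      (fun i => -K (x i) (x i)) Finset.univ
    simp only [sub_eq_add_neg]
    rw [h1, Finset.powerset_univ]
    refine Finset.sum_congr rfl fun s _ => ?_
    have h2 : Finset.univ \ s = sᶜ := by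
      rw [Finset.compl_eq_univ_sdiff]
    rw [h2]
    congr 1
    by_cases h : s.image x ⊆ T
    · rw [if_pos h]
      refine Finset.prod_eq_one fun i hi => ?_
      rw [if_pos (h (Finset.mem_image_of_mem x hi))]
    · rw [if_neg h]
      obtain ⟨a, ha, haT⟩ := Finset.not_subset.mp h
      obtain ⟨i, hi, rfl⟩ := Finset.mem_image.mp ha
      exact Finset.prod_eq_zero hi (if_neg haT)
  have hL : (∑ T : Finset α,
      μ T * ∏ i : Fin k, ((if x i ∈ T then (1 : ℝ) else 0) - K (x i) (x i)))
      = ∑ s : Finset (Fin k), detSub K (s.image x) * ∏ i ∈ sᶜ, (-K (x i) (x i)) := by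
    simp only [hprod, Finset.mul_sum]
    rw [Finset.sum_comm]
    refine Finset.sum_congr rfl fun s _ => ?_
    rw [← hdet (s.image x), Finset.sum_mul]
    refine Finset.sum_congr rfl fun T _ => ?_
    by_cases h : s.image x ⊆ T <;> simp [h, mul_comm]
  rw [hL]
  -- RHS
  set a : Fin k → Fin k → ℝ := fun i j => K (x i) (x j)
  set b : Fin k → Fin k → ℝ := fun i j => if i = j then -K (x i) (x i) else 0
  have hM : (Matrix.of fun i j : Fin k => if i = j then 0 else K (x i) (x j))
      = Matrix.of (a + b) := by
    ext i j
    by_cases h : i = j <;> simp [a, b, h]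
  rw [hM]
  have hdet' : Matrix.det (Matrix.of (a + b))
      = ∑ s : Finset (Fin k), Matrix.det (Matrix.of (s.piecewise a b)) :=
    (Matrix.detRowAlternating.toMultilinearMap.map_add_univ a b :)
  rw [hdet']
  refine Finset.sum_congr rfl fun s _ => ?_
  exact (det_piecewise_aux x hx K s).symm
end
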